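/- arXiv:1110.4792 — 6 statements merged into one kernel-verified Lean document; each statement's English description precedes it below -/
import Mathlib

section
/- Let ρ₁, ρ₂ be density operators and t ≥ 0. An operator M with 0 ≤ M ≤ I satisfies Tr((ρ₁ - tρ₂)M) = Tr((ρ₁ - tρ₂)₊) if and only if M = P₊ + X where P₊ is the support projection of (ρ₁ - tρ₂)₊, 0 ≤ X ≤ P₀, and P₀ is the projection onto the kernel of ρ₁ - tρ₂. (Quantum Neyman–Pearson lemma.) -/
open Matrix BigOperators
open scoped ComplexOrder

noncomputable section

/-- The positive part of a Hermitian matrix, via its spectral decomposition. -/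
def Matrix.IsHermitian.posPart {n : ℕ} {A : Matrix (Fin n) (Fin n) ℂ}
    (hA : A.IsHermitian) : Matrix (Fin n) (Fin n) ℂ :=
  (hA.eigenvectorUnitary : Matrix (Fin n) (Fin n) ℂ) *
    Matrix.diagonal (fun i => ((max (hA.eigenvalues i) 0 : ℝ) : ℂ)) *
    star (hA.eigenvectorUnitary : Matrix (Fin n) (Fin n) ℂ)

/-- The trace norm of a Hermitian matrix: the sum of the absolute values of its
eigenvalues. -/
def Matrix.IsHermitian.traceNorm {n : ℕ} {A : Matrix (Fin n) (Fin n) ℂ}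
    (hA : A.IsHermitian) : ℝ :=
  ∑ i, |hA.eigenvalues i|

/-- A density operator: positive semidefinite with trace one. -/
def Matrix.IsDensity {n : ℕ} (ρ : Matrix (Fin n) (Fin n) ℂ) : Prop :=
  ρ.PosSemidef ∧ ρ.trace = 1

/-- `ρ₁ - t ρ₂` is Hermitian whenever `ρ₁, ρ₂` are. -/
lemma Matrix.IsHermitian.sub_real_smul {n : ℕ} {ρ₁ ρ₂ : Matrix (Fin n) (Fin n) ℂ}
    (h₁ : ρ₁.IsHermitian) (h₂ : ρ₂.IsHermitian) (t : ℝ) :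
    (ρ₁ - (t : ℂ) • ρ₂).IsHermitian := by
  have : ((t : ℂ) • ρ₂).IsHermitian := by
    simp [Matrix.IsHermitian, Matrix.conjTranspose_smul, h₂.eq, Complex.star_def,
      Complex.conj_ofReal]
  exact h₁.sub this

/-- The support projection of the positive part of a Hermitian matrix: the spectral
projection onto the eigenspaces with positive eigenvalues. -/
def Matrix.IsHermitian.posSupport {n : ℕ} {A : Matrix (Fin n) (Fin n) ℂ}
    (hA : A.IsHermitian) : Matrix (Fin n) (Fin n) ℂ :=
  (hA.eigenvectorUnitary : Matrix (Fin n) (Fin n) ℂ) *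
    Matrix.diagonal (fun i => if 0 < hA.eigenvalues i then (1 : ℂ) else 0) *
    star (hA.eigenvectorUnitary : Matrix (Fin n) (Fin n) ℂ)

/-- The orthogonal projection onto the kernel of a Hermitian matrix. -/
def Matrix.IsHermitian.kerProj {n : ℕ} {A : Matrix (Fin n) (Fin n) ℂ}
    (hA : A.IsHermitian) : Matrix (Fin n) (Fin n) ℂ :=
  (hA.eigenvectorUnitary : Matrix (Fin n) (Fin n) ℂ) *
    Matrix.diagonal (fun i => if hA.eigenvalues i = 0 then (1 : ℂ) else 0) *
    star (hA.eigenvectorUnitary : Matrix (Fin n) (Fin n) ℂ)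

variable {n : ℕ}

lemma diag_nonneg' {N : Matrix (Fin n) (Fin n) ℂ} (hN : N.PosSemidef) (i : Fin n) :
    0 ≤ N i i := by
  have := hN.dotProduct_mulVec_nonneg (Pi.single i 1)
  simpa [Matrix.mulVec_single, dotProduct, Pi.single_apply, Finset.sum_ite_eq',
    apply_ite] using this

lemma row_zero_of_diag_zero {N : Matrix (Fin n) (Fin n) ℂ} (hN : N.PosSemidef) {i : Fin n}
    (h : N i i = 0) (j : Fin n) : N i j = 0 ∧ N j i = 0 := by
  have hcol : N *ᵥ (Pi.single i 1) = 0 := by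
    rw [← hN.dotProduct_mulVec_zero_iff]
    simpa [Matrix.mulVec_single, dotProduct, Pi.single_apply, Finset.sum_ite_eq',
      apply_ite] using h
  have hji : N j i = 0 := by
    have := congrFun hcol j
    simpa [Matrix.mulVec_single] using this
  refine ⟨?_, hji⟩
  have := hN.isHermitian.apply i j
  rw [← this, hji, star_zero]

lemma trace_diag_mul (f : Fin n → ℂ) (C : Matrix (Fin n) (Fin n) ℂ) :
    (Matrix.diagonal f * C).trace = ∑ i, f i * C i i := by
  simp [Matrix.trace, Matrix.diag, Matrix.diagonal_mul]

lemma trace_conj_mul (U : Matrix (Fin n) (Fin n) ℂ) (f : Fin n → ℂ)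
    (B : Matrix (Fin n) (Fin n) ℂ) :
    (U * Matrix.diagonal f * star U * B).trace = ∑ i, f i * (star U * B * U) i i := by
  have h1 : U * Matrix.diagonal f * star U * B = U * (Matrix.diagonal f * (star U * B)) := by
    simp [Matrix.mul_assoc]
  rw [h1, Matrix.trace_mul_comm]
  have h2 : Matrix.diagonal f * (star U * B) * U = Matrix.diagonal f * (star U * B * U) := by
    simp [Matrix.mul_assoc]
  rw [h2, trace_diag_mul]

set_option maxHeartbeats 1000000 in
theorem np_aux {A : Matrix (Fin n) (Fin n) ℂ} (hA : A.IsHermitian)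
    (M : Matrix (Fin n) (Fin n) ℂ) (hM₀ : M.PosSemidef) (hM₁ : (1 - M).PosSemidef) :
    (A * M).trace = hA.posPart.trace ↔
      ∃ X : Matrix (Fin n) (Fin n) ℂ, X.PosSemidef ∧
        (hA.kerProj - X).PosSemidef ∧ M = hA.posSupport + X := by
  set U : Matrix (Fin n) (Fin n) ℂ := (hA.eigenvectorUnitary : Matrix (Fin n) (Fin n) ℂ)
    with hU_def
  set d : Fin n → ℝ := hA.eigenvalues with hd_def
  have hU1 : U * star U = 1 := Matrix.mem_unitaryGroup_iff.mp hA.eigenvectorUnitary.2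
  have hU2 : star U * U = 1 := Matrix.mem_unitaryGroup_iff'.mp hA.eigenvectorUnitary.2
  have hspec : A = U * Matrix.diagonal (fun i => (d i : ℂ)) * star U := by
    simpa [Function.comp_def] using hA.spectral_theorem
  have hUherm : star U = Uᴴ := rfl
  set Dp : Matrix (Fin n) (Fin n) ℂ :=
    Matrix.diagonal (fun i => if 0 < d i then (1 : ℂ) else 0) with hDp_def
  set Dk : Matrix (Fin n) (Fin n) ℂ :=
    Matrix.diagonal (fun i => if d i = 0 then (1 : ℂ) else 0) with hDk_def
  set Dm : Matrix (Fin n) (Fin n) ℂ :=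
    Matrix.diagonal (fun i => ((max (d i) 0 : ℝ) : ℂ)) with hDm_def
  have hps : hA.posSupport = U * Dp * star U := rfl
  have hkp : hA.kerProj = U * Dk * star U := rfl
  have hpp : hA.posPart = U * Dm * star U := rfl
  rw [hpp, hps, hkp]
  have hDkherm : Dkᴴ = Dk := by
    have hf : (star fun i => if d i = 0 then (1:ℂ) else 0)
        = fun i => if d i = 0 then (1:ℂ) else 0 := by
      funext i
      by_cases h : d i = 0 <;> simp [h]
    rw [hDk_def, Matrix.diagonal_conjTranspose, hf]
  have hDkDk : Dk * Dk = Dk := by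
    have hf : (fun i => (if d i = 0 then (1:ℂ) else 0) * (if d i = 0 then (1:ℂ) else 0))
        = fun i => if d i = 0 then (1:ℂ) else 0 := by
      funext i
      by_cases h : d i = 0 <;> simp [h]
    rw [hDk_def, Matrix.diagonal_mul_diagonal, hf]
  clear_value U Dp Dk Dm
  have htr : (U * Dm * star U).trace = ∑ i, ((max (d i) 0 : ℝ) : ℂ) := by
    rw [Matrix.trace_mul_cycle, hU2, one_mul, hDm_def, Matrix.trace_diagonal]
  constructor
  · intro heq
    set N : Matrix (Fin n) (Fin n) ℂ := star U * M * U with hN_def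
    clear_value N
    have hNpsd : N.PosSemidef := by
      have h := hM₀.conjTranspose_mul_mul_same U
      rw [← hUherm, ← hN_def] at h
      exact h
    have hN1 : (1 - N).PosSemidef := by
      have h := hM₁.conjTranspose_mul_mul_same U
      rw [← hUherm, Matrix.mul_sub, Matrix.sub_mul, mul_one, hU2, ← hN_def] at h
      exact h
    have heq' : ∑ i, (d i : ℂ) * N i i = ∑ i, ((max (d i) 0 : ℝ) : ℂ) := by
      rw [← htr, ← heq, hspec, trace_conj_mul, ← hN_def]
    -- diagonal entries are real in [0,1]
    have hNr : ∀ i, N i i = (((N i i).re : ℝ) : ℂ) := by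
      intro i
      have h0 := diag_nonneg' hNpsd i
      rw [Complex.le_def] at h0
      exact (Complex.ext_iff.mpr ⟨rfl, h0.2.symm⟩)
    have hr0 : ∀ i, 0 ≤ (N i i).re := fun i => (Complex.le_def.mp (diag_nonneg' hNpsd i)).1
    have hr1 : ∀ i, (N i i).re ≤ 1 := by
      intro i
      have h0 := diag_nonneg' hN1 i
      rw [Complex.le_def] at h0
      have h1 : ((1 - N) i i).re = 1 - (N i i).re := by
        simp [Matrix.sub_apply, Matrix.one_apply_eq]
      have h2 : (0:ℝ) ≤ 1 - (N i i).re := by simpa [h1] using h0.1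
      linarith
    have h2 : ∑ i, (d i : ℂ) * N i i = ((∑ i, d i * (N i i).re : ℝ) : ℂ) := by
      push_cast
      exact Finset.sum_congr rfl fun i _ => by rw [← hNr i]
    have hsum : ∑ i, d i * (N i i).re = ∑ i, max (d i) 0 := by
      have h3 := h2.symm.trans heq'
      exact_mod_cast h3
    have hle : ∀ i ∈ Finset.univ, d i * (N i i).re ≤ max (d i) 0 := by
      intro i _
      rcases le_or_gt (d i) 0 with h | h
      · exact le_trans (mul_nonpos_of_nonpos_of_nonneg h (hr0 i)) (le_max_right _ _)
      · exact le_trans (mul_le_of_le_one_right h.le (hr1 i)) (le_max_left _ _)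
    have hkey := (Finset.sum_eq_sum_iff_of_le hle).mp hsum
    have hpos : ∀ i, 0 < d i → N i i = 1 := by
      intro i hi
      have h := hkey i (Finset.mem_univ i)
      rw [max_eq_left hi.le] at h
      have hre : (N i i).re = 1 :=
        mul_left_cancel₀ (ne_of_gt hi) (h.trans (mul_one (d i)).symm)
      rw [hNr i, hre]
      simp
    have hneg : ∀ i, d i < 0 → N i i = 0 := by
      intro i hi
      have h := hkey i (Finset.mem_univ i)
      rw [max_eq_right hi.le] at h
      have hre : (N i i).re = 0 := by
        rcases mul_eq_zero.mp h with h' | h'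
        · exact absurd h' (ne_of_lt hi)
        · exact h'
      rw [hNr i, hre]
      simp
    -- structural identity
    have hN_eq : N = Dp + Dk * N * Dk := by
      ext i j
      have hDkNDk : (Dk * N * Dk) i j =
          (if d i = 0 then (1:ℂ) else 0) * N i j * (if d j = 0 then (1:ℂ) else 0) := by
        rw [hDk_def, Matrix.mul_diagonal, Matrix.diagonal_mul]
      have hDpij : Dp i j = if i = j then (if 0 < d i then (1:ℂ) else 0) else 0 := by
        rw [hDp_def, Matrix.diagonal_apply]
      rcases lt_trichotomy (d i) 0 with hi | hi | hi
      · have hrow := (row_zero_of_diag_zero hNpsd (hneg i hi) j).1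
        simp only [Matrix.add_apply, hDkNDk, hDpij, hrow]
        rw [if_neg (ne_of_lt hi)]
        rcases eq_or_ne i j with rfl | hne
        · simp [not_lt.mpr hi.le]
        · simp [hne]
      · -- d i = 0
        have hki : (if d i = 0 then (1:ℂ) else 0) = 1 := if_pos hi
        have hDp0 : Dp i j = 0 := by
          rw [hDpij]
          rcases eq_or_ne i j with rfl | hne
          · simp [hi]
          · simp [hne]
        rcases lt_trichotomy (d j) 0 with hj | hj | hj
        · have hij0 := (row_zero_of_diag_zero hNpsd (hneg j hj) i).2
          simp [Matrix.add_apply, hDkNDk, hDp0, hij0]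
        · simp [Matrix.add_apply, hDkNDk, hDp0, hki, if_pos hj]
        · have h1N : (1 - N) j j = 0 := by
            rw [Matrix.sub_apply, Matrix.one_apply_eq, hpos j hj, sub_self]
          have hij0 : (1 - N) i j = 0 := (row_zero_of_diag_zero hN1 h1N i).2
          have hne : i ≠ j := fun h => absurd hi (by rw [h]; exact hj.ne')
          have hz : N i j = 0 := by
            rw [Matrix.sub_apply, Matrix.one_apply_ne hne, zero_sub, neg_eq_zero] at hij0
            exact hij0
          simp [Matrix.add_apply, hDkNDk, hDp0, hz]
      · -- 0 < d i
        have h1N : (1 - N) i i = 0 := by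
          rw [Matrix.sub_apply, Matrix.one_apply_eq, hpos i hi, sub_self]
        have hij0 : (1 - N) i j = 0 := (row_zero_of_diag_zero hN1 h1N j).1
        have hNij : N i j = if i = j then (1:ℂ) else 0 := by
          rcases eq_or_ne i j with rfl | hne
          · rw [if_pos rfl]; exact hpos i hi
          · rw [if_neg hne]
            rw [Matrix.sub_apply, Matrix.one_apply_ne hne, zero_sub, neg_eq_zero] at hij0
            exact hij0
        simp only [Matrix.add_apply, hDkNDk, hDpij, hNij]
        rw [if_neg (ne_of_gt hi)]
        rcases eq_or_ne i j with rfl | hne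
        · simp [hi]
        · simp [hne]
    refine ⟨(U * Dk) * N * (U * Dk)ᴴ, hNpsd.mul_mul_conjTranspose_same _, ?_, ?_⟩
    · have hker : U * Dk * star U - (U * Dk) * N * (U * Dk)ᴴ
          = (U * Dk) * (1 - N) * (U * Dk)ᴴ := by
        rw [Matrix.mul_sub, Matrix.sub_mul, mul_one]
        congr 1
        rw [Matrix.conjTranspose_mul, hDkherm, ← hUherm]
        calc U * Dk * star U = U * (Dk * Dk) * star U := by rw [hDkDk]
          _ = U * Dk * (Dk * star U) := by simp only [Matrix.mul_assoc]
      rw [hker]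
      exact hN1.mul_mul_conjTranspose_same _
    · have hM_eq : M = U * N * star U := by
        rw [hN_def, ← Matrix.mul_assoc, ← Matrix.mul_assoc, hU1, one_mul, Matrix.mul_assoc,
          hU1, mul_one]
      rw [hM_eq]
      conv_lhs => rw [hN_eq]
      rw [Matrix.mul_add, Matrix.add_mul]
      congr 1
      rw [Matrix.conjTranspose_mul, hDkherm, ← hUherm]
      simp only [Matrix.mul_assoc]
  · rintro ⟨X, hX, hkX, rfl⟩
    rw [Matrix.mul_add, Matrix.trace_add]
    have h1 : A * (U * Dp * star U) = U * Dm * star U := by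
      rw [hspec]
      have hdd : Matrix.diagonal (fun i => (d i : ℂ)) * Dp = Dm := by
        have hfun : (fun i => (d i : ℂ) * (if 0 < d i then (1:ℂ) else 0))
            = fun i => ((max (d i) 0 : ℝ) : ℂ) := by
          funext i
          rcases le_or_gt (d i) 0 with h | h
          · simp [not_lt.mpr h, max_eq_right h]
          · simp [h, max_eq_left h.le]
        rw [hDp_def, hDm_def, Matrix.diagonal_mul_diagonal, hfun]
      calc U * Matrix.diagonal (fun i => (d i : ℂ)) * star U * (U * Dp * star U)
          = U * (Matrix.diagonal (fun i => (d i : ℂ)) * (star U * U) * Dp) * star U := by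
            simp only [Matrix.mul_assoc]
        _ = U * Dm * star U := by rw [hU2, mul_one, hdd]
    have h2 : (A * X).trace = 0 := by
      rw [hspec, trace_conj_mul]
      set Y : Matrix (Fin n) (Fin n) ℂ := star U * X * U with hY_def
      clear_value Y
      have hYpsd : Y.PosSemidef := by
        have h := hX.conjTranspose_mul_mul_same U
        rw [← hUherm, ← hY_def] at h
        exact h
      have hkY : (Dk - Y).PosSemidef := by
        have h := hkX.conjTranspose_mul_mul_same U
        rw [← hUherm, Matrix.mul_sub, Matrix.sub_mul, ← hY_def] at h
        have hDkeq : star U * (U * Dk * star U) * U = Dk := by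
          rw [← Matrix.mul_assoc, ← Matrix.mul_assoc, hU2, one_mul, Matrix.mul_assoc, hU2,
            mul_one]
        rwa [hDkeq] at h
      apply Finset.sum_eq_zero
      intro i _
      by_cases hdi : d i = 0
      · simp [hdi]
      · have hYii : Y i i = 0 := by
          have h0 : 0 ≤ Y i i := diag_nonneg' hYpsd i
          have h1 : 0 ≤ (Dk - Y) i i := diag_nonneg' hkY i
          rw [Matrix.sub_apply, hDk_def, Matrix.diagonal_apply_eq, if_neg hdi, zero_sub] at h1
          exact le_antisymm (by rwa [neg_nonneg] at h1) h0
        rw [hYii, mul_zero]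
    rw [h1, h2, add_zero]


/-- Quantum Neyman–Pearson lemma: a test `0 ≤ M ≤ I` attains
`Tr((ρ₁ - tρ₂)M) = Tr((ρ₁ - tρ₂)₊)` iff `M = P₊ + X` with `0 ≤ X ≤ P₀`. -/
theorem quantum_neyman_pearson {n : ℕ} (ρ₁ ρ₂ : Matrix (Fin n) (Fin n) ℂ)
    (h₁ : ρ₁.IsDensity) (h₂ : ρ₂.IsDensity) (t : ℝ) (ht : 0 ≤ t)
    (M : Matrix (Fin n) (Fin n) ℂ) (hM₀ : M.PosSemidef) (hM₁ : (1 - M).PosSemidef) :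
    ((ρ₁ - (t : ℂ) • ρ₂) * M).trace = ((h₁.1.1.sub_real_smul h₂.1.1 t).posPart).trace ↔
      ∃ X : Matrix (Fin n) (Fin n) ℂ, X.PosSemidef ∧
        ((h₁.1.1.sub_real_smul h₂.1.1 t).kerProj - X).PosSemidef ∧
        M = (h₁.1.1.sub_real_smul h₂.1.1 t).posSupport + X :=
  np_aux _ M hM₀ hM₁
end
end

section
/- Let ρ₁, ρ₂ and σ₁, σ₂ be density operators on finite-dimensional Hilbert spaces, and let T be a positive trace-preserving linear map with T(ρᵢ) = σᵢ for i = 1, 2. Then for every t ≥ 0, ‖ρ₁ - tρ₂‖₁ ≥ ‖σ₁ - tσ₂‖₁. -/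
open Matrix BigOperators
open scoped ComplexOrder

noncomputable section

lemma psd_trace_nonneg {m : ℕ} {A : Matrix (Fin m) (Fin m) ℂ} (hA : A.PosSemidef) :
    0 ≤ A.trace := by
  rw [Matrix.trace]
  refine Finset.sum_nonneg fun i _ => ?_
  exact hA.diag_nonneg

lemma psd_trace_mul_nonneg {m : ℕ} {A B : Matrix (Fin m) (Fin m) ℂ}
    (hA : A.PosSemidef) (hB : B.PosSemidef) : 0 ≤ (A * B).trace := by
  open scoped MatrixOrder in
  obtain ⟨C, rfl⟩ := CStarAlgebra.nonneg_iff_eq_star_mul_self.mp hB.nonneg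
  have key : (C * A * Cᴴ).PosSemidef := hA.mul_mul_conjTranspose_same C
  rw [Matrix.star_eq_conjTranspose, ← Matrix.mul_assoc, Matrix.trace_mul_comm, ← Matrix.mul_assoc]
  exact psd_trace_nonneg key

lemma trace_conj_unitary {m : ℕ} (U : Matrix.unitaryGroup (Fin m) ℂ)
    (D : Matrix (Fin m) (Fin m) ℂ) :
    ((U : Matrix (Fin m) (Fin m) ℂ) * D * star (U : Matrix (Fin m) (Fin m) ℂ)).trace
      = D.trace := by
  rw [Matrix.trace_mul_cycle, Matrix.mem_unitaryGroup_iff'.mp U.2,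
    Matrix.one_mul]

lemma conj_unitary_mul {m : ℕ} (U : Matrix.unitaryGroup (Fin m) ℂ)
    (D₁ D₂ : Matrix (Fin m) (Fin m) ℂ) :
    ((U : Matrix (Fin m) (Fin m) ℂ) * D₁ * star (U : Matrix (Fin m) (Fin m) ℂ)) *
      ((U : Matrix (Fin m) (Fin m) ℂ) * D₂ * star (U : Matrix (Fin m) (Fin m) ℂ))
      = (U : Matrix (Fin m) (Fin m) ℂ) * (D₁ * D₂) * star (U : Matrix (Fin m) (Fin m) ℂ) := by
  have h := Matrix.mem_unitaryGroup_iff'.mp U.2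
  calc ((U : Matrix (Fin m) (Fin m) ℂ) * D₁ * star (U : Matrix (Fin m) (Fin m) ℂ)) *
      ((U : Matrix (Fin m) (Fin m) ℂ) * D₂ * star (U : Matrix (Fin m) (Fin m) ℂ))
      = (U : Matrix (Fin m) (Fin m) ℂ) * D₁ *
        ((star (U : Matrix (Fin m) (Fin m) ℂ) * (U : Matrix (Fin m) (Fin m) ℂ)) *
          (D₂ * star (U : Matrix (Fin m) (Fin m) ℂ))) := by
        simp only [Matrix.mul_assoc]
    _ = _ := by rw [h, Matrix.one_mul, ← Matrix.mul_assoc, ← Matrix.mul_assoc]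

lemma conj_unitary_sub {m : ℕ} (U : Matrix.unitaryGroup (Fin m) ℂ)
    (D₁ D₂ : Matrix (Fin m) (Fin m) ℂ) :
    (U : Matrix (Fin m) (Fin m) ℂ) * (D₁ - D₂) * star (U : Matrix (Fin m) (Fin m) ℂ)
      = (U : Matrix (Fin m) (Fin m) ℂ) * D₁ * star (U : Matrix (Fin m) (Fin m) ℂ) -
        (U : Matrix (Fin m) (Fin m) ℂ) * D₂ * star (U : Matrix (Fin m) (Fin m) ℂ) := by
  rw [Matrix.mul_sub, Matrix.sub_mul]

lemma traceNorm_le_of_decomp {k : ℕ} {B : Matrix (Fin k) (Fin k) ℂ} (hB : B.IsHermitian)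
    {P Q : Matrix (Fin k) (Fin k) ℂ} (hP : P.PosSemidef) (hQ : Q.PosSemidef)
    (hPQ : B = P - Q) : hB.traceNorm ≤ (P.trace + Q.trace).re := by
  classical
  set U := hB.eigenvectorUnitary with hUdef
  set lam := hB.eigenvalues with hlamdef
  set χ : Fin k → ℂ := fun i => if 0 < lam i then 1 else 0 with hχ
  set Pr : Matrix (Fin k) (Fin k) ℂ :=
    (U : Matrix (Fin k) (Fin k) ℂ) * Matrix.diagonal χ * star (U : Matrix (Fin k) (Fin k) ℂ)
    with hPr
  have hχnn : ∀ i, 0 ≤ χ i := fun i => by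
    by_cases h : 0 < lam i <;> simp [hχ, h]
  have hdiagχ : (Matrix.diagonal χ).PosSemidef := Matrix.posSemidef_diagonal_iff.mpr hχnn
  have hPrpsd : Pr.PosSemidef := by
    simpa [hPr, Matrix.star_eq_conjTranspose] using
      hdiagχ.mul_mul_conjTranspose_same (U : Matrix (Fin k) (Fin k) ℂ)
  have hPr'psd : ((1 : Matrix (Fin k) (Fin k) ℂ) - Pr).PosSemidef := by
    have e : (1 : Matrix (Fin k) (Fin k) ℂ) - Pr
        = (U : Matrix (Fin k) (Fin k) ℂ) * Matrix.diagonal (fun i => 1 - χ i) *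
          star (U : Matrix (Fin k) (Fin k) ℂ) := by
      have : Matrix.diagonal (fun i => (1 : ℂ) - χ i)
          = (1 : Matrix (Fin k) (Fin k) ℂ) - Matrix.diagonal χ := by
        ext i j
        by_cases h : i = j <;> simp [Matrix.diagonal, Matrix.one_apply, h]
      rw [this, conj_unitary_sub, Matrix.mul_one,
        Matrix.mem_unitaryGroup_iff.mp U.2]
    rw [e]
    have : (Matrix.diagonal (fun i => (1 : ℂ) - χ i)).PosSemidef :=
      Matrix.posSemidef_diagonal_iff.mpr (fun i => by
        by_cases h : 0 < lam i <;> norm_num [hχ, h])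
    simpa [Matrix.star_eq_conjTranspose] using
      this.mul_mul_conjTranspose_same (U : Matrix (Fin k) (Fin k) ℂ)
  -- spectral theorem
  have hspec : B = (U : Matrix (Fin k) (Fin k) ℂ) *
      Matrix.diagonal (Complex.ofReal ∘ lam) * star (U : Matrix (Fin k) (Fin k) ℂ) :=
    hB.spectral_theorem
  -- trace of Pr * B
  have trPrB : (Pr * B).trace = ((∑ i, max (lam i) 0 : ℝ) : ℂ) := by
    rw [hPr]
    conv_lhs => rw [hspec]
    rw [conj_unitary_mul, trace_conj_unitary, Matrix.diagonal_mul_diagonal,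
      Matrix.trace_diagonal]
    push_cast
    refine Finset.sum_congr rfl fun i _ => ?_
    by_cases h : 0 < lam i
    · simp [hχ, h, max_eq_left h.le]
    · simp [hχ, h, max_eq_right (not_lt.mp h)]
  -- trace of B
  have trB : B.trace = ((∑ i, lam i : ℝ) : ℂ) := by
    conv_lhs => rw [hspec]
    rw [trace_conj_unitary, Matrix.trace_diagonal]
    push_cast
    rfl
  -- real quantities
  set a := ((Pr * P).trace).re
  set b := ((Pr * Q).trace).re
  set p := P.trace.re
  set q := Q.trace.re
  have hb : 0 ≤ b := (Complex.le_def.mp (psd_trace_mul_nonneg hPrpsd hQ)).1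
  have hap : a ≤ p := by
    have h0 : 0 ≤ (((1 : Matrix (Fin k) (Fin k) ℂ) - Pr) * P).trace :=
      psd_trace_mul_nonneg hPr'psd hP
    have h1 : (((1 : Matrix (Fin k) (Fin k) ℂ) - Pr) * P).trace
        = P.trace - (Pr * P).trace := by
      rw [Matrix.sub_mul, Matrix.one_mul, Matrix.trace_sub]
    rw [h1] at h0
    have := (Complex.le_def.mp h0).1
    simp only [Complex.sub_re, Complex.zero_re] at this
    linarith
  have hsplit : (Pr * B).trace = (Pr * P).trace - (Pr * Q).trace := by
    rw [hPQ, Matrix.mul_sub, Matrix.trace_sub]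
  have hS : (∑ i, max (lam i) 0) = a - b := by
    have := congrArg Complex.re (trPrB.symm.trans hsplit)
    simpa using this
  have hsum : (∑ i, lam i) = p - q := by
    have h2 : B.trace = P.trace - Q.trace := by rw [hPQ, Matrix.trace_sub]
    have := congrArg Complex.re (trB.symm.trans h2)
    simpa using this
  have habs : hB.traceNorm = 2 * (∑ i, max (lam i) 0) - ∑ i, lam i := by
    rw [Matrix.IsHermitian.traceNorm, ← hlamdef, Finset.mul_sum, ← Finset.sum_sub_distrib]
    refine Finset.sum_congr rfl fun i _ => ?_
    rcases le_or_gt (lam i) 0 with h | h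
    · rw [abs_of_nonpos h, max_eq_right h]; ring
    · rw [abs_of_pos h, max_eq_left h.le]; ring
  rw [habs, hS, hsum, Complex.add_re]
  linarith


/-- pos/neg decomposition of a Hermitian matrix with the trace-norm identity. -/
lemma exists_decomp {k : ℕ} {B : Matrix (Fin k) (Fin k) ℂ} (hB : B.IsHermitian) :
    ∃ P Q : Matrix (Fin k) (Fin k) ℂ, P.PosSemidef ∧ Q.PosSemidef ∧ B = P - Q ∧
      (P.trace + Q.trace).re = hB.traceNorm := by
  classical
  set U := hB.eigenvectorUnitary with hUdef
  set lam := hB.eigenvalues with hlamdef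
  refine ⟨(U : Matrix (Fin k) (Fin k) ℂ) *
      Matrix.diagonal (fun i => ((max (lam i) 0 : ℝ) : ℂ)) * star (U : Matrix (Fin k) (Fin k) ℂ),
    (U : Matrix (Fin k) (Fin k) ℂ) *
      Matrix.diagonal (fun i => ((max (lam i) 0 - lam i : ℝ) : ℂ)) *
      star (U : Matrix (Fin k) (Fin k) ℂ), ?_, ?_, ?_, ?_⟩
  · have h : (Matrix.diagonal (fun i => ((max (lam i) 0 : ℝ) : ℂ))).PosSemidef :=
      Matrix.posSemidef_diagonal_iff.mpr fun i => by
        rw [Complex.zero_le_real]; exact le_max_right _ _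
    simpa [Matrix.star_eq_conjTranspose] using
      h.mul_mul_conjTranspose_same (U : Matrix (Fin k) (Fin k) ℂ)
  · have h : (Matrix.diagonal (fun i => ((max (lam i) 0 - lam i : ℝ) : ℂ))).PosSemidef :=
      Matrix.posSemidef_diagonal_iff.mpr fun i => by
        rw [Complex.zero_le_real]; simp [sub_nonneg, le_max_left]
    simpa [Matrix.star_eq_conjTranspose] using
      h.mul_mul_conjTranspose_same (U : Matrix (Fin k) (Fin k) ℂ)
  · rw [← conj_unitary_sub]
    have e : (Matrix.diagonal (fun i => ((max (lam i) 0 : ℝ) : ℂ)) -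
        Matrix.diagonal (fun i => ((max (lam i) 0 - lam i : ℝ) : ℂ)))
        = Matrix.diagonal (Complex.ofReal ∘ lam) := by
      ext i j
      by_cases h : i = j <;> simp [Matrix.diagonal, h]
    rw [e]
    exact hB.spectral_theorem
  · rw [trace_conj_unitary, trace_conj_unitary, Matrix.trace_diagonal, Matrix.trace_diagonal,
      Matrix.IsHermitian.traceNorm, ← hlamdef]
    rw [← Complex.ofReal_sum, ← Complex.ofReal_sum, ← Complex.ofReal_add, Complex.ofReal_re,
      ← Finset.sum_add_distrib]
    refine Finset.sum_congr rfl fun i _ => ?_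
    rcases le_or_gt (lam i) 0 with h | h
    · rw [abs_of_nonpos h, max_eq_right h]; ring
    · rw [abs_of_pos h, max_eq_left h.le]; ring

/-- A positive trace-preserving map mapping `ρᵢ` to `σᵢ` contracts the trace-norm
distance `‖ρ₁ - tρ₂‖₁ ≥ ‖σ₁ - tσ₂‖₁` for all `t ≥ 0`. -/
theorem traceNorm_ge_of_positive_trace_preserving {n m : ℕ}
    (ρ₁ ρ₂ : Matrix (Fin n) (Fin n) ℂ) (σ₁ σ₂ : Matrix (Fin m) (Fin m) ℂ)
    (hρ₁ : ρ₁.IsDensity) (hρ₂ : ρ₂.IsDensity)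
    (hσ₁ : σ₁.IsDensity) (hσ₂ : σ₂.IsDensity)
    (T : Matrix (Fin n) (Fin n) ℂ →ₗ[ℂ] Matrix (Fin m) (Fin m) ℂ)
    (hpos : ∀ A : Matrix (Fin n) (Fin n) ℂ, A.PosSemidef → (T A).PosSemidef)
    (htr : ∀ A : Matrix (Fin n) (Fin n) ℂ, (T A).trace = A.trace)
    (h1 : T ρ₁ = σ₁) (h2 : T ρ₂ = σ₂) :
    ∀ t : ℝ, 0 ≤ t →
      (hσ₁.1.1.sub_real_smul hσ₂.1.1 t).traceNorm ≤
        (hρ₁.1.1.sub_real_smul hρ₂.1.1 t).traceNorm := by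
  intro t _
  obtain ⟨P, Q, hP, hQ, hPQ, htrace⟩ := exists_decomp (hρ₁.1.1.sub_real_smul hρ₂.1.1 t)
  have hTPQ : σ₁ - (t : ℂ) • σ₂ = T P - T Q := by
    rw [← map_sub, ← hPQ, map_sub, _root_.map_smul, h1, h2]
  have := traceNorm_le_of_decomp (hσ₁.1.1.sub_real_smul hσ₂.1.1 t) (hpos P hP) (hpos Q hQ) hTPQ
  rwa [htr, htr, htrace] at this
end
end

section
/- Let f : [0, ∞) → ℝ be convex, nonincreasing, with f(0) = 1 and f(t) ≥ max(1-t, 0), differentiable at two points 0 < s₁ < s₂. Then there exists a classical binary experiment on a three-point set, i.e., probability distributions p, q on {1,2,3}, such that g(t) := Σ_{i : p_i - t q_i > 0} (p_i - t q_i) satisfies g(t) ≤ f(t) for all t ≥ 0 and g(sᵢ) = f(sᵢ) for i = 1, 2. -/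
open BigOperators

/-- Tangent line of a convex function lies below the function. -/
lemma tangent_le (f : ℝ → ℝ) (hconv : ConvexOn ℝ (Set.Ici (0 : ℝ)) f)
    (x : ℝ) (hx : 0 ≤ x) (hd : DifferentiableAt ℝ f x) :
    ∀ y : ℝ, 0 ≤ y → f x + deriv f x * (y - x) ≤ f y := by
  intro y hy
  rcases lt_trichotomy x y with h | h | h
  · have := hconv.deriv_le_slope (Set.mem_Ici.2 hx) (Set.mem_Ici.2 hy) h hd
    rw [slope_def_field] at this
    have hxy : 0 < y - x := by linarith
    rw [le_div_iff₀ hxy] at this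
    nlinarith [this]
  · simp [h]
  · have := hconv.slope_le_deriv (Set.mem_Ici.2 hy) (Set.mem_Ici.2 hx) h hd
    rw [slope_def_field] at this
    have hxy : 0 < x - y := by linarith
    rw [div_le_iff₀ hxy] at this
    nlinarith [this]

set_option maxHeartbeats 2000000 in
/-- Given a convex, nonincreasing function `f` on `[0,∞)` with `f(0) = 1` and
`f(t) ≥ max (1-t) 0`, differentiable at `0 < s₁ < s₂`, there is a classical binary
experiment `(p, q)` on a three-point set whose function
`g(t) = ∑_{i : pᵢ - t qᵢ > 0} (pᵢ - t qᵢ)` is dominated by `f` on `[0,∞)` and touches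
it at `s₁` and `s₂`. -/
theorem exists_three_point_experiment (f : ℝ → ℝ)
    (hconv : ConvexOn ℝ (Set.Ici (0 : ℝ)) f)
    (hmono : AntitoneOn f (Set.Ici (0 : ℝ)))
    (hf0 : f 0 = 1)
    (hfge : ∀ t : ℝ, 0 ≤ t → max (1 - t) 0 ≤ f t)
    (s₁ s₂ : ℝ) (hs₁ : 0 < s₁) (hs₁₂ : s₁ < s₂)
    (hd₁ : DifferentiableAt ℝ f s₁) (hd₂ : DifferentiableAt ℝ f s₂) :
    ∃ p q : Fin 3 → ℝ,
      (∀ i, 0 ≤ p i) ∧ (∀ i, 0 ≤ q i) ∧ (∑ i, p i = 1) ∧ (∑ i, q i = 1) ∧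
      (∀ t : ℝ, 0 ≤ t →
        ∑ i ∈ Finset.univ.filter (fun i => 0 < p i - t * q i), (p i - t * q i) ≤ f t) ∧
      (∑ i ∈ Finset.univ.filter (fun i => 0 < p i - s₁ * q i), (p i - s₁ * q i) = f s₁) ∧
      (∑ i ∈ Finset.univ.filter (fun i => 0 < p i - s₂ * q i), (p i - s₂ * q i) = f s₂) := by
  have hs₂ : (0:ℝ) < s₂ := hs₁.trans hs₁₂
  set a₁ : ℝ := -(deriv f s₁) with ha₁def
  set a₂ : ℝ := -(deriv f s₂) with ha₂def
  set c₁ : ℝ := f s₁ + a₁ * s₁ with hc₁def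
  set c₂ : ℝ := f s₂ + a₂ * s₂ with hc₂def
  -- tangent line inequalities
  have T1 : ∀ t : ℝ, 0 ≤ t → c₁ - a₁ * t ≤ f t := by
    intro t ht
    have := tangent_le f hconv s₁ hs₁.le hd₁ t ht
    have h1 : deriv f s₁ * (t - s₁) = -(a₁ * t) + a₁ * s₁ := by rw [ha₁def]; ring
    linarith [this, h1.ge, h1.le]
  have T2 : ∀ t : ℝ, 0 ≤ t → c₂ - a₂ * t ≤ f t := by
    intro t ht
    have := tangent_le f hconv s₂ hs₂.le hd₂ t ht
    have h1 : deriv f s₂ * (t - s₂) = -(a₂ * t) + a₂ * s₂ := by rw [ha₂def]; ring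
    linarith [this, h1.ge, h1.le]
  have hfs₁ : 1 - s₁ ≤ f s₁ := le_trans (le_max_left _ _) (hfge s₁ hs₁.le)
  have hfs₂0 : (0:ℝ) ≤ f s₂ := le_trans (le_max_right _ _) (hfge s₂ hs₂.le)
  -- a₂ ≥ 0
  have ha₂0 : 0 ≤ a₂ := by
    have hsl := hconv.deriv_le_slope (Set.mem_Ici.2 hs₂.le)
      (Set.mem_Ici.2 (by linarith : (0:ℝ) ≤ s₂ + 1)) (by linarith) hd₂
    rw [slope_def_field] at hsl
    have hm : f (s₂ + 1) ≤ f s₂ :=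
      hmono (Set.mem_Ici.2 hs₂.le) (Set.mem_Ici.2 (by linarith)) (by linarith)
    have : (f (s₂+1) - f s₂) / (s₂ + 1 - s₂) = f (s₂+1) - f s₂ := by
      norm_num
    rw [this] at hsl
    rw [ha₂def]; linarith
  -- a₂ ≤ a₁
  have ha₁₂ : a₂ ≤ a₁ := by
    have h1 := T1 s₂ hs₂.le
    have h2 := T2 s₁ hs₁.le
    nlinarith [h1, h2, hc₁def.ge, hc₁def.le, hc₂def.ge, hc₂def.le, hs₁₂]
  -- c₁ ≤ 1
  have hc₁1 : c₁ ≤ 1 := by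
    have := T1 0 le_rfl
    rw [hf0] at this; linarith [this]
  -- a₁ ≤ 1
  have ha₁1 : a₁ ≤ 1 := by
    rw [hc₁def] at hc₁1
    nlinarith [hc₁1, hfs₁]
  -- lower bound on c₁
  have hc₁low : 1 - s₁ + a₁ * s₁ ≤ c₁ := by rw [hc₁def]; linarith [hfs₁]
  -- c₂ ≥ 0
  have hc₂0 : 0 ≤ c₂ := by rw [hc₂def]; nlinarith [hfs₂0, ha₂0, hs₂]
  -- c₂ ≤ c₁
  have hc₂₁ : c₂ ≤ c₁ := by
    have h2 := T2 s₁ hs₁.le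
    rw [hc₁def]
    nlinarith [h2, mul_nonneg (sub_nonneg.2 ha₁₂) hs₁.le]
  -- helper: positivity of first hinge forces t < s₁
  have hApos : ∀ t : ℝ, 0 ≤ t → 0 < 1 - c₁ - t * (1 - a₁) → t < s₁ := by
    intro t ht hA
    rcases lt_or_eq_of_le ha₁1 with h | h
    · exact (mul_lt_mul_iff_of_pos_right (show (0:ℝ) < 1 - a₁ by linarith)).mp (by nlinarith [hc₁low])
    · exfalso
      have h1 : a₁ * s₁ = s₁ := by rw [h, one_mul]
      have h2 : t * (1 - a₁) = 0 := by rw [h]; ring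
      linarith [hc₁low, hA, h1.le, h1.ge, h2.le, h2.ge]
  -- helper: nonpositivity of third hinge
  have hCneg : ∀ t : ℝ, 0 ≤ t → c₂ - t * a₂ ≤ 0 → (t * a₂ = 0 ∧ c₂ = 0) ∨ s₂ ≤ t := by
    intro t ht hC
    rcases eq_or_lt_of_le ha₂0 with h | h
    · left
      have htz : t * a₂ = 0 := by rw [← h]; ring
      exact ⟨htz, by linarith [hc₂0, hC, htz.le, htz.ge]⟩
    · right
      have h1 : a₂ * s₂ ≤ a₂ * t := by
        have : a₂ * s₂ ≤ c₂ := by linarith [hc₂def.ge, hfs₂0]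
        nlinarith [hC]
      exact le_of_mul_le_mul_left h1 h
  refine ⟨![1 - c₁, c₁ - c₂, c₂], ![1 - a₁, a₁ - a₂, a₂], ?_, ?_, ?_, ?_, ?_, ?_, ?_⟩
  · intro i; fin_cases i <;> simp <;> linarith
  · intro i; fin_cases i <;> simp <;> linarith
  · rw [Fin.sum_univ_three]
    simp only [Matrix.cons_val_zero, Matrix.cons_val_one, Matrix.head_cons,
      Matrix.cons_val_two, Matrix.tail_cons]
    ring
  · rw [Fin.sum_univ_three]
    simp only [Matrix.cons_val_zero, Matrix.cons_val_one, Matrix.head_cons,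
      Matrix.cons_val_two, Matrix.tail_cons]
    ring
  · -- main inequality
    intro t ht
    have hf1 : 1 - t ≤ f t := le_trans (le_max_left _ _) (hfge t ht)
    have hfnn : 0 ≤ f t := le_trans (le_max_right _ _) (hfge t ht)
    rw [Finset.sum_filter, Fin.sum_univ_three]
    simp only [Matrix.cons_val_zero, Matrix.cons_val_one, Matrix.head_cons,
      Matrix.cons_val_two, Matrix.tail_cons]
    have hBlow : t < s₁ → 0 ≤ (c₁ - c₂) - t * (a₁ - a₂) := by
      intro hts
      nlinarith [T2 s₁ hs₁.le, hc₁def.le, hc₁def.ge,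
        mul_nonneg (by linarith : (0:ℝ) ≤ s₁ - t) (by linarith : (0:ℝ) ≤ a₁ - a₂)]
    simp only [sub_eq_add_neg]
    simp only [← sub_eq_add_neg]
    split_ifs with h1 h2 h3 h3 h2 h3 h3
    · linarith [hf1]
    · rcases hCneg t ht (not_lt.mp h3) with ⟨htz, hc⟩ | hst
      · linarith [hf1, htz.le, htz.ge]
      · exact absurd (hApos t ht h1) (by linarith)
    · have hB := hBlow (hApos t ht h1)
      linarith [hf1]
    · have hts := hApos t ht h1
      have hB := hBlow hts
      rcases hCneg t ht (not_lt.mp h3) with ⟨htz, hc⟩ | hst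
      · linarith [hf1, htz.le, htz.ge]
      · exact absurd hst (by linarith)
    · linarith [T1 t ht]
    · rcases hCneg t ht (not_lt.mp h3) with ⟨htz, hc⟩ | hst
      · linarith [T1 t ht, htz.le, htz.ge]
      · exfalso
        nlinarith [T1 s₂ hs₂.le, hc₂def.le, hc₂def.ge, h2,
          mul_nonneg (by linarith : (0:ℝ) ≤ t - s₂) (by linarith : (0:ℝ) ≤ a₁ - a₂)]
    · linarith [T2 t ht]
    · linarith [hfnn]
  · -- equality at s₁
    have hA1 : 1 - c₁ - s₁ * (1 - a₁) ≤ 0 := by linarith [hfs₁, hc₁def.le, hc₁def.ge]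
    have hB1 : 0 ≤ (c₁ - c₂) - s₁ * (a₁ - a₂) := by
      linarith [T2 s₁ hs₁.le, hc₁def.le, hc₁def.ge]
    have hC1 : 0 ≤ c₂ - s₁ * a₂ := by
      nlinarith [hfs₂0, hc₂def.ge, mul_le_mul_of_nonneg_left hs₁₂.le ha₂0]
    rw [Finset.sum_filter, Fin.sum_univ_three]
    simp only [Matrix.cons_val_zero, Matrix.cons_val_one, Matrix.head_cons,
      Matrix.cons_val_two, Matrix.tail_cons]
    simp only [sub_eq_add_neg]
    simp only [← sub_eq_add_neg]
    split_ifs with h1 h2 h3 h3 h2 h3 h3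
    · exfalso; linarith [hA1]
    · exfalso; linarith [hA1]
    · exfalso; linarith [hA1]
    · exfalso; linarith [hA1]
    · linarith [hc₁def.le, hc₁def.ge]
    · linarith [hC1, not_lt.mp h3, hc₁def.le, hc₁def.ge]
    · linarith [hB1, not_lt.mp h2, hc₁def.le, hc₁def.ge]
    · linarith [hB1, hC1, not_lt.mp h2, not_lt.mp h3, hc₁def.le, hc₁def.ge]
  · -- equality at s₂
    have hA1 : 1 - c₁ - s₁ * (1 - a₁) ≤ 0 := by linarith [hfs₁, hc₁def.le, hc₁def.ge]
    have hA2 : 1 - c₁ - s₂ * (1 - a₁) ≤ 0 := by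
      nlinarith [hA1, mul_nonneg (by linarith : (0:ℝ) ≤ s₂ - s₁) (by linarith : (0:ℝ) ≤ 1 - a₁)]
    have hB2 : (c₁ - c₂) - s₂ * (a₁ - a₂) ≤ 0 := by
      linarith [T1 s₂ hs₂.le, hc₂def.le, hc₂def.ge]
    have hC2 : 0 ≤ c₂ - s₂ * a₂ := by linarith [hfs₂0, hc₂def.le, hc₂def.ge]
    rw [Finset.sum_filter, Fin.sum_univ_three]
    simp only [Matrix.cons_val_zero, Matrix.cons_val_one, Matrix.head_cons,
      Matrix.cons_val_two, Matrix.tail_cons]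
    simp only [sub_eq_add_neg]
    simp only [← sub_eq_add_neg]
    split_ifs with h1 h2 h3 h3 h2 h3 h3
    · exfalso; linarith [hA2]
    · exfalso; linarith [hA2]
    · exfalso; linarith [hA2]
    · exfalso; linarith [hA2]
    · exfalso; linarith [hB2]
    · exfalso; linarith [hB2]
    · linarith [hc₂def.le, hc₂def.ge]
    · linarith [hC2, not_lt.mp h3, hc₂def.le, hc₂def.ge]
end

section
/- Let ρ₁, ρ₂, σ₁, σ₂ be density operators. Suppose that for every real t ≥ 0, ‖ρ₁ - tρ₂‖₁ ≥ ‖σ₁ - tσ₂‖₁. Then the linear map L defined on span{ρ₁, ρ₂} by L(a₁ρ₁ + a₂ρ₂) = a₁σ₁ + a₂σ₂ is well defined and satisfies ‖L(x)‖₁ ≤ ‖x‖₁ for all x in span{ρ₁, ρ₂} with real coefficients. -/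
open Matrix BigOperators
open scoped ComplexOrder

noncomputable section

/-- Real linear combinations of Hermitian matrices are Hermitian. -/
lemma Matrix.IsHermitian.real_combo {n : ℕ} {ρ₁ ρ₂ : Matrix (Fin n) (Fin n) ℂ}
    (h₁ : ρ₁.IsHermitian) (h₂ : ρ₂.IsHermitian) (a₁ a₂ : ℝ) :
    ((a₁ : ℂ) • ρ₁ + (a₂ : ℂ) • ρ₂).IsHermitian := by
  have k₁ : ((a₁ : ℂ) • ρ₁).IsHermitian := by
    simp [Matrix.IsHermitian, Matrix.conjTranspose_smul, h₁.eq, Complex.star_def,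
      Complex.conj_ofReal]
  have k₂ : ((a₂ : ℂ) • ρ₂).IsHermitian := by
    simp [Matrix.IsHermitian, Matrix.conjTranspose_smul, h₂.eq, Complex.star_def,
      Complex.conj_ofReal]
  exact k₁.add k₂


/-- trace-norm functional via cfc -/
noncomputable def TN {k : ℕ} (A : Matrix (Fin k) (Fin k) ℂ) : ℝ :=
  Complex.re (Matrix.trace (cfc (fun x : ℝ => |x|) A))

lemma TN_eq {k : ℕ} {A : Matrix (Fin k) (Fin k) ℂ} (hA : A.IsHermitian) :
    TN A = ∑ i, |hA.eigenvalues i| := by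
  unfold TN
  rw [hA.cfc_eq, Matrix.IsHermitian.cfc, Unitary.conjStarAlgAut_apply, Matrix.trace_mul_cycle]
  rw [show (star (hA.eigenvectorUnitary : Matrix (Fin k) (Fin k) ℂ)) *
      (hA.eigenvectorUnitary : Matrix (Fin k) (Fin k) ℂ) = 1 from
    Unitary.star_mul_self_of_mem (SetLike.coe_mem _), one_mul, Matrix.trace_diagonal]
  simp [Function.comp]

lemma TN_smul {k : ℕ} {A : Matrix (Fin k) (Fin k) ℂ} (hA : A.IsHermitian) (c : ℝ) :
    TN ((c : ℂ) • A) = |c| * TN A := by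
  have hsm : (c : ℂ) • A = c • A := by
    ext i j; simp [Complex.real_smul]
  unfold TN
  rw [hsm, ← cfc_comp_smul c (fun x : ℝ => |x|) A (by fun_prop) (show IsSelfAdjoint A from hA)]
  have : (fun x : ℝ => |c • x|) = fun x : ℝ => |c| • |x| := by
    ext x; simp [abs_mul]
  rw [this, cfc_smul |c| (fun x : ℝ => |x|) A (by fun_prop)]
  rw [Matrix.trace_smul]
  simp [Complex.real_smul]

lemma TN_neg {k : ℕ} {A : Matrix (Fin k) (Fin k) ℂ} (hA : A.IsHermitian) :
    TN (-A) = TN A := by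
  have := TN_smul hA (-1)
  simpa using this

lemma TN_psd {k : ℕ} {A : Matrix (Fin k) (Fin k) ℂ} (hA : A.PosSemidef) :
    TN A = Complex.re (Matrix.trace A) := by
  unfold TN
  congr 1
  rw [cfc_congr (g := fun x : ℝ => x) ?_, cfc_id' ℝ A (show IsSelfAdjoint A from hA.1)]
  intro x hx
  rw [Matrix.IsHermitian.spectrum_real_eq_range_eigenvalues hA.1] at hx
  obtain ⟨i, rfl⟩ := hx
  exact abs_of_nonneg (hA.eigenvalues_nonneg i)

lemma psd_real_smul {k : ℕ} {A : Matrix (Fin k) (Fin k) ℂ} (hA : A.PosSemidef) {c : ℝ}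
    (hc : 0 ≤ c) : ((c : ℂ) • A).PosSemidef := by
  refine Matrix.PosSemidef.of_dotProduct_mulVec_nonneg ?_ (fun x => ?_)
  · simp [Matrix.IsHermitian, Matrix.conjTranspose_smul, hA.1.eq, Complex.star_def,
      Complex.conj_ofReal]
  · rw [Matrix.smul_mulVec, dotProduct_smul]
    exact mul_nonneg (by exact_mod_cast hc) (hA.dotProduct_mulVec_nonneg x)

lemma TN_density {k : ℕ} {ρ : Matrix (Fin k) (Fin k) ℂ} (hρ : ρ.IsDensity) : TN ρ = 1 := by
  rw [TN_psd hρ.1, hρ.2]; simp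

lemma TN_combo_nonneg {k : ℕ} {τ₁ τ₂ : Matrix (Fin k) (Fin k) ℂ}
    (h₁ : τ₁.IsDensity) (h₂ : τ₂.IsDensity) {a₁ a₂ : ℝ} (ha₁ : 0 ≤ a₁) (ha₂ : 0 ≤ a₂) :
    TN ((a₁ : ℂ) • τ₁ + (a₂ : ℂ) • τ₂) = a₁ + a₂ := by
  rw [TN_psd ((psd_real_smul h₁.1 ha₁).add (psd_real_smul h₂.1 ha₂))]
  rw [Matrix.trace_add, Matrix.trace_smul, Matrix.trace_smul, h₁.2, h₂.2]
  simp

/-- If `‖ρ₁ - tρ₂‖₁ ≥ ‖σ₁ - tσ₂‖₁` for all `t ≥ 0`, then the map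
`a₁ρ₁ + a₂ρ₂ ↦ a₁σ₁ + a₂σ₂` is well defined and a trace-norm contraction on the real
span of `{ρ₁, ρ₂}`. -/
theorem statistical_morphism_contraction {n m : ℕ}
    (ρ₁ ρ₂ : Matrix (Fin n) (Fin n) ℂ) (σ₁ σ₂ : Matrix (Fin m) (Fin m) ℂ)
    (hρ₁ : ρ₁.IsDensity) (hρ₂ : ρ₂.IsDensity)
    (hσ₁ : σ₁.IsDensity) (hσ₂ : σ₂.IsDensity)
    (h : ∀ t : ℝ, 0 ≤ t →
      (hσ₁.1.1.sub_real_smul hσ₂.1.1 t).traceNorm ≤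
        (hρ₁.1.1.sub_real_smul hρ₂.1.1 t).traceNorm) :
    ∀ a₁ a₂ : ℝ,
      ((hσ₁.1.1.real_combo hσ₂.1.1 a₁ a₂).traceNorm) ≤
        ((hρ₁.1.1.real_combo hρ₂.1.1 a₁ a₂).traceNorm) := by
  
  have mainkey : ∀ a₁ a₂ : ℝ, 0 ≤ a₁ →
      TN ((a₁ : ℂ) • σ₁ + (a₂ : ℂ) • σ₂) ≤ TN ((a₁ : ℂ) • ρ₁ + (a₂ : ℂ) • ρ₂) := by
    intro a₁ a₂ ha₁
    rcases le_or_gt 0 a₂ with ha₂ | ha₂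
    · rw [TN_combo_nonneg hσ₁ hσ₂ ha₁ ha₂, TN_combo_nonneg hρ₁ hρ₂ ha₁ ha₂]
    · rcases eq_or_lt_of_le ha₁ with hz | ha₁pos
      · have e : ∀ {k : ℕ} (τ₁ τ₂ : Matrix (Fin k) (Fin k) ℂ),
            (a₁ : ℂ) • τ₁ + (a₂ : ℂ) • τ₂ = (a₂ : ℂ) • τ₂ := by
          intro k τ₁ τ₂
          rw [← hz]
          simp
        rw [e, e, TN_smul hσ₂.1.1 a₂, TN_smul hρ₂.1.1 a₂,
          TN_density hσ₂, TN_density hρ₂]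
      · set t : ℝ := -a₂ / a₁ with ht_def
        have ht : 0 ≤ t := div_nonneg (by linarith) ha₁
        have hat : a₁ * t = -a₂ := by
          rw [ht_def, mul_div_assoc', div_eq_iff ha₁pos.ne']; ring
        have e : ∀ {k : ℕ} (τ₁ τ₂ : Matrix (Fin k) (Fin k) ℂ),
            (a₁ : ℂ) • τ₁ + (a₂ : ℂ) • τ₂ = (a₁ : ℂ) • (τ₁ - (t : ℂ) • τ₂) := by
          intro k τ₁ τ₂
          rw [smul_sub, smul_smul, show ((a₁ : ℂ) * t) = ((a₁ * t : ℝ) : ℂ) by push_cast; ring,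
            hat, sub_eq_add_neg]
          push_cast
          rw [neg_smul, neg_neg]
        rw [e, e, TN_smul (hσ₁.1.1.sub_real_smul hσ₂.1.1 t) a₁,
          TN_smul (hρ₁.1.1.sub_real_smul hρ₂.1.1 t) a₁]
        have hh := h t ht
        rw [Matrix.IsHermitian.traceNorm, Matrix.IsHermitian.traceNorm,
          ← TN_eq (hσ₁.1.1.sub_real_smul hσ₂.1.1 t), ← TN_eq (hρ₁.1.1.sub_real_smul hρ₂.1.1 t)] at hh
        exact mul_le_mul_of_nonneg_left hh (abs_nonneg a₁)
  intro a₁ a₂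
  rw [Matrix.IsHermitian.traceNorm, Matrix.IsHermitian.traceNorm,
    ← TN_eq (hσ₁.1.1.real_combo hσ₂.1.1 a₁ a₂), ← TN_eq (hρ₁.1.1.real_combo hρ₂.1.1 a₁ a₂)]
  rcases le_or_gt 0 a₁ with ha₁ | ha₁
  · exact mainkey a₁ a₂ ha₁
  · have e : ∀ {k : ℕ} (τ₁ τ₂ : Matrix (Fin k) (Fin k) ℂ),
        (a₁ : ℂ) • τ₁ + (a₂ : ℂ) • τ₂ = -(((-a₁ : ℝ) : ℂ) • τ₁ + ((-a₂ : ℝ) : ℂ) • τ₂) := by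
      intro k τ₁ τ₂
      push_cast
      rw [neg_add, neg_smul, neg_smul, neg_neg, neg_neg]
    rw [e ρ₁ ρ₂, e σ₁ σ₂, TN_neg (Matrix.IsHermitian.real_combo hσ₁.1.1 hσ₂.1.1 (-a₁) (-a₂)),
      TN_neg (Matrix.IsHermitian.real_combo hρ₁.1.1 hρ₂.1.1 (-a₁) (-a₂))]
    exact mainkey (-a₁) (-a₂) (by linarith)
end
end

section
/- Let A_θ ∈ ℝ for θ in a finite set Θ and let ρ_θ, σ_θ be density operators. If ‖Σ_θ A_θ ρ_θ‖₁ ≥ ‖Σ_θ A_θ σ_θ‖₁ - 2ε Σ_θ |A_θ| holds for all real coefficients (A_θ), then for every test 0 ≤ N₀ ≤ I on the second system there exists 0 ≤ M₀ ≤ I on the first such that for the loss-difference: Tr(Σ_θ A_θ ρ_θ M₀) ≥ Tr(Σ_θ A_θ σ_θ N₀) - ε Σ_θ|A_θ| where M₀ is the support projection of (Σ_θ A_θ ρ_θ)₊. Concretely: max over 0 ≤ M₀ ≤ I of Tr(Σ A_θ ρ_θ M₀) = (Σ_θ A_θ + ‖Σ_θ A_θ ρ_θ‖₁)/2. -/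
open Matrix BigOperators
open scoped ComplexOrder

noncomputable section

/-- Real combinations of Hermitian matrices are Hermitian. -/
lemma Matrix.IsHermitian.real_sum {Θ : Type*} [Fintype Θ] {n : ℕ}
    (A : Θ → ℝ) (ρ : Θ → Matrix (Fin n) (Fin n) ℂ) (h : ∀ θ, (ρ θ).IsHermitian) :
    (∑ θ, (A θ : ℂ) • ρ θ).IsHermitian := by
  unfold Matrix.IsHermitian
  rw [Matrix.conjTranspose_sum]
  refine Finset.sum_congr rfl fun θ _ => ?_
  rw [Matrix.conjTranspose_smul, (h θ).eq]
  simp [Complex.star_def, Complex.conj_ofReal]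

lemma diag_re_nonneg {n : ℕ} {M : Matrix (Fin n) (Fin n) ℂ} (hM : M.PosSemidef) (i : Fin n) :
    0 ≤ (M i i).re := by
  have h := hM.dotProduct_mulVec_nonneg (Pi.single i 1)
  have he : star (Pi.single i 1) ⬝ᵥ M *ᵥ Pi.single i 1 = M i i := by
    simp [dotProduct, mulVec, Pi.single_apply]
  rw [he, Complex.nonneg_iff] at h
  exact h.1

private lemma trace_test_isGreatest {n : ℕ} {S : Matrix (Fin n) (Fin n) ℂ} (hS : S.IsHermitian) :
    IsGreatest {x : ℝ | ∃ M : Matrix (Fin n) (Fin n) ℂ, M.PosSemidef ∧ (1 - M).PosSemidef ∧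
        x = ((S * M).trace).re}
      ((S.trace.re + hS.traceNorm) / 2) := by
  set U : Matrix (Fin n) (Fin n) ℂ := (hS.eigenvectorUnitary : Matrix (Fin n) (Fin n) ℂ) with hU
  set lam := hS.eigenvalues with hlam
  have hU1 : star U * U = 1 := Matrix.mem_unitaryGroup_iff'.mp hS.eigenvectorUnitary.2
  have hU2 : U * star U = 1 := Matrix.mem_unitaryGroup_iff.mp hS.eigenvectorUnitary.2
  have hspec : S = U * Matrix.diagonal (fun i => (lam i : ℂ)) * star U := hS.spectral_theorem
  have htr : S.trace.re = ∑ i, lam i := by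
    rw [hspec, Matrix.trace_mul_cycle, hU1, one_mul, Matrix.trace_diagonal]
    simp
  constructor
  · -- membership: the optimal test
    set p : Fin n → ℝ := fun i => if 0 ≤ lam i then 1 else 0 with hp
    refine ⟨U * Matrix.diagonal (fun i => (p i : ℂ)) * star U, ?_, ?_, ?_⟩
    · exact (Matrix.PosSemidef.diagonal (fun i => Complex.zero_le_real.mpr (by positivity))).mul_mul_conjTranspose_same U
    · have : (1 : Matrix (Fin n) (Fin n) ℂ) - U * Matrix.diagonal (fun i => (p i : ℂ)) * star U
          = U * Matrix.diagonal (fun i => ((1 - p i : ℝ) : ℂ)) * star U := by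
        have : Matrix.diagonal (fun i => ((1 - p i : ℝ) : ℂ))
            = 1 - Matrix.diagonal (fun i => (p i : ℂ)) := by
          ext i j
          by_cases hij : i = j
          · subst hij
            simp [Matrix.sub_apply, Matrix.one_apply, Matrix.diagonal_apply_eq]
          · simp [Matrix.sub_apply, Matrix.one_apply_ne hij, Matrix.diagonal_apply_ne _ hij]
        rw [this, mul_sub, sub_mul, mul_one, hU2]
      rw [this]
      refine (Matrix.PosSemidef.diagonal fun i => Complex.zero_le_real.mpr ?_).mul_mul_conjTranspose_same U
      simp only [hp]; split <;> norm_num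
    · have hmul : S * (U * Matrix.diagonal (fun i => (p i : ℂ)) * star U)
          = U * (Matrix.diagonal (fun i => (lam i : ℂ)) * Matrix.diagonal (fun i => (p i : ℂ))) * star U := by
        rw [hspec]
        rw [show U * Matrix.diagonal (fun i => (lam i : ℂ)) * star U *
            (U * Matrix.diagonal (fun i => (p i : ℂ)) * star U)
          = U * Matrix.diagonal (fun i => (lam i : ℂ)) * (star U * U) *
            Matrix.diagonal (fun i => (p i : ℂ)) * star U by noncomm_ring]
        rw [hU1]; noncomm_ring
      rw [hmul, Matrix.trace_mul_cycle, hU1, one_mul,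
        Matrix.diagonal_mul_diagonal, Matrix.trace_diagonal]
      have : (∑ i, (lam i : ℂ) * (p i : ℂ)).re = ∑ i, lam i * p i := by
        simp
      rw [this, htr]
      unfold Matrix.IsHermitian.traceNorm
      rw [← hlam, ← Finset.sum_add_distrib, Finset.sum_div]
      refine Finset.sum_congr rfl fun i _ => ?_
      simp only [hp]
      rcases le_or_gt 0 (lam i) with hl | hl
      · rw [if_pos hl, abs_of_nonneg hl]; ring
      · rw [if_neg (not_le.mpr hl), abs_of_neg hl]; ring
  · -- upper bound
    rintro x ⟨M, hM, hM1, rfl⟩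
    set M' := star U * M * U with hM'
    have hM'psd : M'.PosSemidef := hM.conjTranspose_mul_mul_same U
    have hM'1 : ((1 : Matrix (Fin n) (Fin n) ℂ) - M').PosSemidef := by
      have : (1 : Matrix (Fin n) (Fin n) ℂ) - M' = star U * (1 - M) * U := by
        rw [mul_sub, sub_mul, mul_one, hU1, hM']
      rw [this]; exact hM1.conjTranspose_mul_mul_same U
    have htrace : (S * M).trace = (Matrix.diagonal (fun i => (lam i : ℂ)) * M').trace := by
      rw [hspec, hM']
      rw [show U * Matrix.diagonal (fun i => (lam i : ℂ)) * star U * M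
        = U * (Matrix.diagonal (fun i => (lam i : ℂ)) * (star U * M)) by noncomm_ring]
      rw [Matrix.trace_mul_comm]
      noncomm_ring
    have hdiagtr : (Matrix.diagonal (fun i => (lam i : ℂ)) * M').trace
        = ∑ i, (lam i : ℂ) * M' i i := by
      simp [Matrix.trace, Matrix.diag, Matrix.diagonal_mul]
    have hre : ((S * M).trace).re = ∑ i, lam i * (M' i i).re := by
      rw [htrace, hdiagtr, Complex.re_sum]
      refine Finset.sum_congr rfl fun i _ => ?_
      simp [Complex.mul_re]
    rw [hre, htr]
    unfold Matrix.IsHermitian.traceNorm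
    rw [← hlam, ← Finset.sum_add_distrib, Finset.sum_div]
    refine Finset.sum_le_sum fun i _ => ?_
    have h0 : 0 ≤ (M' i i).re := diag_re_nonneg hM'psd i
    have h1 : (M' i i).re ≤ 1 := by
      have := diag_re_nonneg hM'1 i
      simp only [Matrix.sub_apply, Matrix.one_apply_eq, Complex.sub_re, Complex.one_re] at this
      linarith
    rcases abs_cases (lam i) with ⟨ha, _⟩ | ⟨ha, hneg⟩
    · nlinarith
    · nlinarith

/-- If `‖∑ A_θ ρ_θ‖₁ ≥ ‖∑ A_θ σ_θ‖₁ - 2ε ∑|A_θ|` for all real coefficients, then for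
every test `0 ≤ N₀ ≤ I` there is a test `0 ≤ M₀ ≤ I` with
`Tr(∑ A_θ ρ_θ M₀) ≥ Tr(∑ A_θ σ_θ N₀) - ε ∑|A_θ|`; concretely,
`max_{0 ≤ M ≤ I} Tr((∑ A_θ ρ_θ) M) = (∑ A_θ + ‖∑ A_θ ρ_θ‖₁)/2`. -/
theorem deficiency_tests {Θ : Type*} [Fintype Θ] {n m : ℕ}
    (ρ : Θ → Matrix (Fin n) (Fin n) ℂ) (σ : Θ → Matrix (Fin m) (Fin m) ℂ)
    (hρ : ∀ θ, (ρ θ).IsDensity) (hσ : ∀ θ, (σ θ).IsDensity)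
    (ε : ℝ) (hε : 0 ≤ ε) (A : Θ → ℝ)
    (h : ∀ B : Θ → ℝ,
      (Matrix.IsHermitian.real_sum B σ fun θ => (hσ θ).1.1).traceNorm - 2 * ε * ∑ θ, |B θ| ≤
        (Matrix.IsHermitian.real_sum B ρ fun θ => (hρ θ).1.1).traceNorm) :
    (∀ N₀ : Matrix (Fin m) (Fin m) ℂ, N₀.PosSemidef → (1 - N₀).PosSemidef →
      ∃ M₀ : Matrix (Fin n) (Fin n) ℂ, M₀.PosSemidef ∧ (1 - M₀).PosSemidef ∧
        (((∑ θ, (A θ : ℂ) • σ θ) * N₀).trace).re - ε * ∑ θ, |A θ| ≤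
          (((∑ θ, (A θ : ℂ) • ρ θ) * M₀).trace).re) ∧
    IsGreatest
      {x : ℝ | ∃ M : Matrix (Fin n) (Fin n) ℂ, M.PosSemidef ∧ (1 - M).PosSemidef ∧
        x = (((∑ θ, (A θ : ℂ) • ρ θ) * M).trace).re}
      ((∑ θ, A θ + (Matrix.IsHermitian.real_sum A ρ fun θ => (hρ θ).1.1).traceNorm) / 2) := by
  classical
  have hSh : (∑ θ, (A θ : ℂ) • ρ θ).IsHermitian :=
    Matrix.IsHermitian.real_sum A ρ fun θ => (hρ θ).1.1
  have hTh : (∑ θ, (A θ : ℂ) • σ θ).IsHermitian :=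
    Matrix.IsHermitian.real_sum A σ fun θ => (hσ θ).1.1
  have hTrS : (∑ θ, (A θ : ℂ) • ρ θ).trace.re = ∑ θ, A θ := by
    rw [Matrix.trace_sum]
    have : ∀ θ, ((A θ : ℂ) • ρ θ).trace = (A θ : ℂ) := by
      intro θ; rw [Matrix.trace_smul, (hρ θ).2, smul_eq_mul, mul_one]
    rw [Finset.sum_congr rfl fun θ _ => this θ]
    simp
  have hTrT : (∑ θ, (A θ : ℂ) • σ θ).trace.re = ∑ θ, A θ := by
    rw [Matrix.trace_sum]
    have : ∀ θ, ((A θ : ℂ) • σ θ).trace = (A θ : ℂ) := by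
      intro θ; rw [Matrix.trace_smul, (hσ θ).2, smul_eq_mul, mul_one]
    rw [Finset.sum_congr rfl fun θ _ => this θ]
    simp
  have hkeyS := trace_test_isGreatest hSh
  have hkeyT := trace_test_isGreatest hTh
  constructor
  · intro N₀ hN₀ hN₀1
    obtain ⟨M₀, hM₀, hM₀1, hval⟩ := hkeyS.1
    refine ⟨M₀, hM₀, hM₀1, ?_⟩
    have hub : (((∑ θ, (A θ : ℂ) • σ θ) * N₀).trace).re
        ≤ ((∑ θ, (A θ : ℂ) • σ θ).trace.re + hTh.traceNorm) / 2 :=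
      hkeyT.2 ⟨N₀, hN₀, hN₀1, rfl⟩
    have hh := h A
    rw [← hval, hTrS, hTrT] at *
    have : Matrix.IsHermitian.traceNorm (Matrix.IsHermitian.real_sum A σ fun θ => (hσ θ).1.1)
        = hTh.traceNorm := rfl
    rw [this] at hh
    have : Matrix.IsHermitian.traceNorm (Matrix.IsHermitian.real_sum A ρ fun θ => (hρ θ).1.1)
        = hSh.traceNorm := rfl
    rw [this] at hh
    have hεsum : 0 ≤ ∑ θ, |A θ| := Finset.sum_nonneg fun θ _ => abs_nonneg _
    linarith
  · have : Matrix.IsHermitian.traceNorm (Matrix.IsHermitian.real_sum A ρ fun θ => (hρ θ).1.1)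
        = hSh.traceNorm := rfl
    rw [this, ← hTrS]
    exact hkeyS
end
end

section
/- Let u, v be positive semidefinite operators on a finite-dimensional Hilbert space H such that ker(u) is not contained in ker(v) and ker(v) is not contained in ker(u), and let B(K) be another matrix algebra with given positive semidefinite operators L(u), L(v) ∈ B(K). Choose φ, ψ ∈ H with uφ = 0, vψ = 0, uψ ≠ 0, vφ ≠ 0. Then the map T(a) = (⟨ψ, aψ⟩/⟨ψ, uψ⟩) L(u) + (⟨φ, aφ⟩/⟨φ, vφ⟩) L(v) is a completely positive linear map B(H) → B(K) with T(u) = L(u) and T(v) = L(v). -/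
open Matrix BigOperators Kronecker
open scoped ComplexOrder

noncomputable section

/-- The completely positive extension map built from two vectors `ψ, φ` and target
operators `Lu, Lv`. -/
def extensionMap {n m : ℕ} (u v : Matrix (Fin n) (Fin n) ℂ)
    (Lu Lv : Matrix (Fin m) (Fin m) ℂ) (φ ψ : Fin n → ℂ) :
    Matrix (Fin n) (Fin n) ℂ → Matrix (Fin m) (Fin m) ℂ :=
  fun a =>
    ((star ψ ⬝ᵥ a *ᵥ ψ) / (star ψ ⬝ᵥ u *ᵥ ψ)) • Lu +
    ((star φ ⬝ᵥ a *ᵥ φ) / (star φ ⬝ᵥ v *ᵥ φ)) • Lv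

lemma psd_smul' {k : ℕ} {C : Matrix (Fin k) (Fin k) ℂ} (hC : C.PosSemidef) {c : ℂ}
    (hc : 0 ≤ c) : (c • C).PosSemidef := by
  have him : c.im = 0 := (Complex.le_def.mp hc).2.symm
  refine Matrix.PosSemidef.of_dotProduct_mulVec_nonneg ?_ ?_
  · have hcs : star c = c := by
      rw [Complex.star_def, Complex.conj_eq_iff_im]; exact him
    unfold Matrix.IsHermitian
    rw [conjTranspose_smul, hcs, hC.1]
  · intro x
    rw [smul_mulVec, dotProduct_smul, smul_eq_mul]
    exact mul_nonneg hc (hC.dotProduct_mulVec_nonneg x)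

lemma psd_kron {k m : ℕ} {C : Matrix (Fin k) (Fin k) ℂ} {L : Matrix (Fin m) (Fin m) ℂ}
    (hC : C.PosSemidef) (hL : L.PosSemidef) : (C ⊗ₖ L).PosSemidef := by
  exact hC.kronecker hL

lemma inv_nonneg' {c : ℂ} (hc : 0 ≤ c) : 0 ≤ c⁻¹ := by
  have him : c.im = 0 := by simpa using (Complex.le_def.mp hc).2.symm
  have hre : 0 ≤ c.re := by simpa using (Complex.le_def.mp hc).1
  have hc' : (↑c.re : ℂ) = c := Complex.ext (by simp) (by simp [him])
  rw [← hc', ← Complex.ofReal_inv]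
  exact Complex.zero_le_real.mpr (inv_nonneg.mpr hre)

lemma slice_eq {k n : ℕ} (A : Matrix (Fin k × Fin n) (Fin k × Fin n) ℂ) (ψ : Fin n → ℂ)
    (p1 q1 : Fin k) :
    star ψ ⬝ᵥ (Matrix.of fun i j => A (p1, i) (q1, j)) *ᵥ ψ
      = ((Matrix.of fun (r : Fin k × Fin n) (s : Fin k) => if r.1 = s then ψ r.2 else 0)ᴴ * A *
         (Matrix.of fun (r : Fin k × Fin n) (s : Fin k) => if r.1 = s then ψ r.2 else 0)) p1 q1 := by
  simp [Matrix.mul_apply, Matrix.mulVec, dotProduct, Fintype.sum_prod_type,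
    Finset.mul_sum, Finset.sum_mul, apply_ite, mul_ite, ite_mul, mul_comm, mul_assoc,
    mul_left_comm]
  rw [Finset.sum_comm]

/-- Given `u, v ≥ 0` with mutually non-contained kernels, witnessed by `φ, ψ` with
`uφ = 0`, `vψ = 0`, `uψ ≠ 0`, `vφ ≠ 0`, and positive targets `Lu, Lv`, the map
`T(a) = (⟨ψ,aψ⟩/⟨ψ,uψ⟩) Lu + (⟨φ,aφ⟩/⟨φ,vφ⟩) Lv` is completely positive and maps
`u ↦ Lu`, `v ↦ Lv`. -/
theorem extensionMap_completelyPositive {n m : ℕ}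
    (u v : Matrix (Fin n) (Fin n) ℂ) (hu : u.PosSemidef) (hv : v.PosSemidef)
    (Lu Lv : Matrix (Fin m) (Fin m) ℂ) (hLu : Lu.PosSemidef) (hLv : Lv.PosSemidef)
    (φ ψ : Fin n → ℂ) (hφu : u *ᵥ φ = 0) (hψv : v *ᵥ ψ = 0)
    (hψu : u *ᵥ ψ ≠ 0) (hφv : v *ᵥ φ ≠ 0) :
    (∀ k : ℕ, ∀ A : Matrix (Fin k × Fin n) (Fin k × Fin n) ℂ, A.PosSemidef →
      (Matrix.of fun p q : Fin k × Fin m =>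
        extensionMap u v Lu Lv φ ψ
          (Matrix.of fun i j : Fin n => A (p.1, i) (q.1, j)) p.2 q.2).PosSemidef) ∧
    extensionMap u v Lu Lv φ ψ u = Lu ∧
    extensionMap u v Lu Lv φ ψ v = Lv := by
  have hdu : (0:ℂ) ≤ star ψ ⬝ᵥ u *ᵥ ψ := hu.dotProduct_mulVec_nonneg ψ
  have hdv : (0:ℂ) ≤ star φ ⬝ᵥ v *ᵥ φ := hv.dotProduct_mulVec_nonneg φ
  have hdu0 : star ψ ⬝ᵥ u *ᵥ ψ ≠ 0 := fun h => hψu ((hu.dotProduct_mulVec_zero_iff ψ).mp h)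
  have hdv0 : star φ ⬝ᵥ v *ᵥ φ ≠ 0 := fun h => hφv ((hv.dotProduct_mulVec_zero_iff φ).mp h)
  refine ⟨?_, ?_, ?_⟩
  · intro k A hA
    classical
    set W : Matrix (Fin k × Fin n) (Fin k) ℂ :=
      Matrix.of fun (r : Fin k × Fin n) (s : Fin k) => if r.1 = s then ψ r.2 else 0 with hW
    set W' : Matrix (Fin k × Fin n) (Fin k) ℂ :=
      Matrix.of fun (r : Fin k × Fin n) (s : Fin k) => if r.1 = s then φ r.2 else 0 with hW'
    have hCψ : (Wᴴ * A * W).PosSemidef := hA.conjTranspose_mul_mul_same W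
    have hCφ : (W'ᴴ * A * W').PosSemidef := hA.conjTranspose_mul_mul_same W'
    have key : (Matrix.of fun p q : Fin k × Fin m =>
        extensionMap u v Lu Lv φ ψ
          (Matrix.of fun i j : Fin n => A (p.1, i) (q.1, j)) p.2 q.2)
        = ((star ψ ⬝ᵥ u *ᵥ ψ)⁻¹ • (Wᴴ * A * W)) ⊗ₖ Lu
          + ((star φ ⬝ᵥ v *ᵥ φ)⁻¹ • (W'ᴴ * A * W')) ⊗ₖ Lv := by
      ext p q
      simp only [Matrix.of_apply, extensionMap, Matrix.add_apply, Matrix.smul_apply,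
        Matrix.kroneckerMap_apply, smul_eq_mul]
      rw [slice_eq A ψ p.1 q.1, slice_eq A φ p.1 q.1, ← hW, ← hW']
      ring
    rw [key]
    exact (psd_kron (psd_smul' hCψ (inv_nonneg' hdu)) hLu).add
      (psd_kron (psd_smul' hCφ (inv_nonneg' hdv)) hLv)
  · simp [extensionMap, hφu, div_self hdu0]
  · simp [extensionMap, hψv, div_self hdv0]
end
end
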